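/- arXiv:2011.00522 — 3 statements merged into one kernel-verified Lean document; each statement's English description precedes it below -/
import Mathlib

section
/- Let G be the join of graphs G₁, …, G_ℓ with ℓ ≥ 2. Suppose there exist two distinct indices i and j such that G_i is a single vertex or contains a vertex w_i with V(G_i) \ N_{G_i}[w_i] a clique in G_i, and likewise for G_j. Then G satisfies property P: there exist distinct vertices x, y with {x, y} dominating in G and V(G) \ N_G[x], V(G) \ N_G[y] each empty or a clique. -/
open SimpleGraph

/-- `D` is a dominating set of `G`. -/
def Dominating {V : Type*} (G : SimpleGraph V) (D : Set V) : Prop :=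
  ∀ v ∉ D, ∃ u ∈ D, G.Adj u v

/-- `S` is a secure dominating set of `G`. -/
def SecureDominating {V : Type*} (G : SimpleGraph V) (S : Set V) : Prop :=
  Dominating G S ∧ ∀ v ∉ S, ∃ u ∈ S, G.Adj u v ∧ Dominating G ((S ∪ {v}) \ {u})

/-- Domination number. -/
noncomputable def gamma {V : Type*} (G : SimpleGraph V) : ℕ :=
  sInf {n | ∃ D : Set V, Dominating G D ∧ D.ncard = n}

/-- Secure domination number. -/
noncomputable def gammaS {V : Type*} (G : SimpleGraph V) : ℕ :=
  sInf {n | ∃ S : Set V, SecureDominating G S ∧ S.ncard = n}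

/-- The closed neighborhood of `v` as a set. -/
def closedNbhd {V : Type*} (G : SimpleGraph V) (v : V) : Set V :=
  insert v (G.neighborSet v)

/-- The join of a family of graphs. -/
def JoinFam {ι : Type*} {V : ι → Type*} (G : ∀ i, SimpleGraph (V i)) :
    SimpleGraph (Σ i, V i) where
  Adj x y := (∃ (i : ι) (a b : V i), x = ⟨i, a⟩ ∧ y = ⟨i, b⟩ ∧ (G i).Adj a b) ∨ x.1 ≠ y.1
  symm := by
    constructor
    rintro x y (⟨k, c, d, rfl, rfl, h3⟩ | h)
    · exact Or.inl ⟨k, d, c, rfl, rfl, h3.symm⟩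
    · exact Or.inr h.symm
  loopless := by
    constructor
    rintro x (⟨k, c, d, rfl, h2, h3⟩ | h)
    · cases h2; exact h3.ne rfl
    · exact h rfl

/-- The join of two graphs. -/
def join2 {α β : Type*} (G : SimpleGraph α) (H : SimpleGraph β) :
    SimpleGraph (α ⊕ β) where
  Adj x y := match x, y with
    | .inl a, .inl b => G.Adj a b
    | .inr a, .inr b => H.Adj a b
    | .inl _, .inr _ => True
    | .inr _, .inl _ => True
  symm := by constructor; rintro (a | a) (b | b) h <;> simp_all [SimpleGraph.adj_comm]
  loopless := by constructor; rintro (a | a) h <;> exact h.ne rfl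

/-- The disjoint union of two graphs. -/
def disjUnion2 {α β : Type*} (G : SimpleGraph α) (H : SimpleGraph β) :
    SimpleGraph (α ⊕ β) where
  Adj x y := match x, y with
    | .inl a, .inl b => G.Adj a b
    | .inr a, .inr b => H.Adj a b
    | _, _ => False
  symm := by constructor; rintro (a | a) (b | b) h <;> simp_all [SimpleGraph.adj_comm]
  loopless := by constructor; rintro (a | a) h <;> exact h.ne rfl

/-- Property `P`. -/
def PropP {V : Type*} (G : SimpleGraph V) : Prop :=
  ∃ x y : V, x ≠ y ∧ Dominating G {x, y} ∧
    ((closedNbhd G x)ᶜ = ∅ ∨ G.IsClique (closedNbhd G x)ᶜ) ∧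
    ((closedNbhd G y)ᶜ = ∅ ∨ G.IsClique (closedNbhd G y)ᶜ)

lemma good_exists {n : ℕ} {V : Fin n → Type*} (G : ∀ k, SimpleGraph (V k)) (i : Fin n)
    (h : (∃ u : V i, ∀ v : V i, v = u) ∨ ∃ w : V i, (G i).IsClique (closedNbhd (G i) w)ᶜ) :
    ∃ w : V i, (G i).IsClique (closedNbhd (G i) w)ᶜ := by
  rcases h with ⟨u, hu⟩ | h
  · refine ⟨u, ?_⟩
    have he : (closedNbhd (G i) u)ᶜ = ∅ := by
      ext v; simp [closedNbhd, hu v]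
    rw [he]
    simp
  · exact h

lemma compl_closed_clique {n : ℕ} {V : Fin n → Type*} (G : ∀ k, SimpleGraph (V k)) (i : Fin n)
    (w : V i) (hw : (G i).IsClique (closedNbhd (G i) w)ᶜ) :
    (JoinFam G).IsClique (closedNbhd (JoinFam G) (⟨i, w⟩ : Σ k, V k))ᶜ := by
  rintro ⟨k, a⟩ ha ⟨m, b⟩ hb hne
  simp only [closedNbhd, Set.mem_compl_iff, Set.mem_insert_iff, SimpleGraph.mem_neighborSet,
    not_or] at ha hb
  obtain ⟨ha1, ha2⟩ := ha
  obtain ⟨hb1, hb2⟩ := hb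
  have hki : i = k := by
    by_contra hk
    exact ha2 (Or.inr hk)
  have hmi : i = m := by
    by_contra hk
    exact hb2 (Or.inr hk)
  subst hki; subst hmi
  have hna : ¬ (G i).Adj w a := by
    intro h
    exact ha2 (Or.inl ⟨i, w, a, rfl, rfl, h⟩)
  have hnb : ¬ (G i).Adj w b := by
    intro h
    exact hb2 (Or.inl ⟨i, w, b, rfl, rfl, h⟩)
  have haw : a ≠ w := fun h => ha1 (by rw [h])
  have hbw : b ≠ w := fun h => hb1 (by rw [h])
  have hab : a ≠ b := fun h => hne (by rw [h])
  have hma : a ∈ (closedNbhd (G i) w)ᶜ := by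
    simp [closedNbhd, haw, hna]
  have hmb : b ∈ (closedNbhd (G i) w)ᶜ := by
    simp [closedNbhd, hbw, hnb]
  have := hw hma hmb hab
  exact Or.inl ⟨i, a, b, rfl, rfl, this⟩

theorem join_two_good_parts_satisfies_propP
    {ℓ : ℕ} (hℓ : 2 ≤ ℓ) {V : Fin ℓ → Type*} [∀ k, Fintype (V k)]
    (G : ∀ k, SimpleGraph (V k)) (i j : Fin ℓ) (hij : i ≠ j)
    (hi : (∃ u : V i, ∀ v : V i, v = u) ∨
      ∃ w : V i, (G i).IsClique (closedNbhd (G i) w)ᶜ)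
    (hj : (∃ u : V j, ∀ v : V j, v = u) ∨
      ∃ w : V j, (G j).IsClique (closedNbhd (G j) w)ᶜ) :
    PropP (JoinFam G) := by
  obtain ⟨wi, hwi⟩ := good_exists G i hi
  obtain ⟨wj, hwj⟩ := good_exists G j hj
  refine ⟨⟨i, wi⟩, ⟨j, wj⟩, ?_, ?_, Or.inr (compl_closed_clique G i wi hwi),
    Or.inr (compl_closed_clique G j wj hwj)⟩
  · intro h
    exact hij (congrArg Sigma.fst h)
  · rintro ⟨k, a⟩ _
    by_cases hk : k = i
    · subst hk
      exact ⟨⟨j, wj⟩, Or.inr rfl, Or.inr (Ne.symm hij)⟩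
    · exact ⟨⟨i, wi⟩, Or.inl rfl, Or.inr fun h => hk h.symm⟩
end

section
/- For each k ≥ 1, the graph G_k (as defined) is the join of H₁ and H₂, where H₁ is the edgeless graph on {c, d, e} and H₂ is the disjoint union of K_k on {a₁,…,a_k} and the isolated vertex b. Moreover H₁ has more than one vertex, is connected-complement-free in the sense that H₁ is not a single vertex, and there is no vertex w ∈ V(H₁) with V(H₁) \ N_{H₁}[w] a clique of H₁; hence G_k satisfies property P while failing condition (i) of the original Lemma 2 of Jha–Pradhan–Banerjee. -/
open SimpleGraph

/-- The graph `G_k`: vertices `a_1,...,a_k` (as `Sum.inl i`) forming a clique, and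
`b = Sum.inr 0`, `c = Sum.inr 1`, `d = Sum.inr 2`, `e = Sum.inr 3`; `b` is adjacent
exactly to `c, d, e`, each of `c, d, e` is adjacent to every `a_i`, and `c, d, e`
are pairwise nonadjacent. -/
def Gk (k : ℕ) : SimpleGraph (Fin k ⊕ Fin 4) where
  Adj x y := match x, y with
    | .inl i, .inl j => i ≠ j
    | .inl _, .inr m => m ≠ 0
    | .inr m, .inl _ => m ≠ 0
    | .inr m, .inr n => (m = 0 ∧ n ≠ 0) ∨ (n = 0 ∧ m ≠ 0)
  symm := by constructor; rintro (a|a) (b|b) h <;> simp_all <;> tauto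
  loopless := by constructor; rintro (a|a) h <;> simp_all

def GkEquiv (k : ℕ) : (Fin k ⊕ Fin 4) ≃ (Fin 3 ⊕ (Fin k ⊕ Fin 1)) where
  toFun x := match x with
    | .inl i => .inr (.inl i)
    | .inr 0 => .inr (.inr 0)
    | .inr 1 => .inl 0
    | .inr 2 => .inl 1
    | .inr 3 => .inl 2
  invFun x := match x with
    | .inr (.inl i) => .inl i
    | .inr (.inr _) => .inr 0
    | .inl 0 => .inr 1
    | .inl 1 => .inr 2
    | .inl 2 => .inr 3
  left_inv := by rintro (i | m) <;> first | rfl | (fin_cases m <;> rfl)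
  right_inv := by
    rintro (j | (i | o))
    · fin_cases j <;> rfl
    · rfl
    · fin_cases o <;> rfl

theorem Gk_is_counterexample_to_original_lemma (k : ℕ) (hk : 0 < k) :
    Nonempty (Gk k ≃g join2 (⊥ : SimpleGraph (Fin 3))
      (disjUnion2 (⊤ : SimpleGraph (Fin k)) (⊤ : SimpleGraph (Fin 1)))) ∧
    1 < Fintype.card (Fin 3) ∧
    (¬ ∃ w : Fin 3,
      (⊥ : SimpleGraph (Fin 3)).IsClique (closedNbhd (⊥ : SimpleGraph (Fin 3)) w)ᶜ) ∧
    PropP (Gk k) := by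
  refine ⟨⟨⟨GkEquiv k, ?_⟩⟩, by decide, ?_, ?_⟩
  · rintro (i | m) (j | n)
    · simp [GkEquiv, Gk, join2, disjUnion2]
    · fin_cases n <;> simp [GkEquiv, Gk, join2, disjUnion2] <;> decide
    · fin_cases m <;> simp [GkEquiv, Gk, join2, disjUnion2] <;> decide
    · fin_cases m <;> fin_cases n <;> simp [GkEquiv, Gk, join2, disjUnion2] <;> decide
  · rintro ⟨w, hw⟩
    have h2 : ∃ u v : Fin 3, u ≠ w ∧ v ≠ w ∧ u ≠ v := by fin_cases w <;> decide
    obtain ⟨u, v, hu, hv, huv⟩ := h2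
    have : (⊥ : SimpleGraph (Fin 3)).Adj u v := by
      apply hw _ _ huv <;> simp [closedNbhd, hu, hv]
    simp at this
  · refine ⟨.inr 0, .inl ⟨0, hk⟩, by simp, ?_, ?_, ?_⟩
    · rintro (i | m) hv
      · exact ⟨.inl ⟨0, hk⟩, by simp, by
          simp only [Gk]
          intro h
          exact hv (by simp [h])⟩
      · refine ⟨.inr 0, by simp, ?_⟩
        have hm : m ≠ 0 := fun h => hv (by simp [h])
        simp [Gk, hm]
    · right
      rintro x hx y hy hxy
      obtain ⟨i, rfl⟩ : ∃ i, x = Sum.inl i := by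
        rcases x with i | m
        · exact ⟨i, rfl⟩
        · exfalso
          apply hx
          rcases eq_or_ne m 0 with h | h
          · simp [closedNbhd, h]
          · simp [closedNbhd, neighborSet, Gk, h]
      obtain ⟨j, rfl⟩ : ∃ j, y = Sum.inl j := by
        rcases y with j | m
        · exact ⟨j, rfl⟩
        · exfalso
          apply hy
          rcases eq_or_ne m 0 with h | h
          · simp [closedNbhd, h]
          · simp [closedNbhd, neighborSet, Gk, h]
      simp only [Gk]
      exact fun h => hxy (by simp [h])
    · right
      rintro x hx y hy hxy
      exfalso
      apply hxy
      have key : ∀ z : Fin k ⊕ Fin 4, z ∈ (closedNbhd (Gk k) (.inl ⟨0, hk⟩))ᶜ →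
          z = Sum.inr 0 := by
        rintro (i | m) hz
        · exfalso
          apply hz
          rcases eq_or_ne i ⟨0, hk⟩ with h | h
          · simp [closedNbhd, h]
          · simp [closedNbhd, neighborSet, Gk, Ne.symm h]
        · rcases eq_or_ne m 0 with h | h
          · simp [h]
          · exfalso
            apply hz
            simp [closedNbhd, neighborSet, Gk, h]
      rw [key x hx, key y hy]
end

section
/- For every k ≥ 1, the graph G_k (join of the edgeless graph on {c,d,e} with K_k ∪ {b}) has secure domination number γ_s(G_k) = 2, with {a₁, b} a minimum secure dominating set. -/
open SimpleGraph

theorem gammaS_Gk_eq_two (k : ℕ) (hk : 0 < k) :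
    gammaS (Gk k) = 2 ∧
    SecureDominating (Gk k)
      {Sum.inl (⟨0, hk⟩ : Fin k), (Sum.inr 0 : Fin k ⊕ Fin 4)} := by
  have hadj : ∀ x y : Fin k ⊕ Fin 4, (Gk k).Adj x y ↔ (match x, y with
    | .inl i, .inl j => i ≠ j
    | .inl _, .inr m => m ≠ 0
    | .inr m, .inl _ => m ≠ 0
    | .inr m, .inr n => (m = 0 ∧ n ≠ 0) ∨ (n = 0 ∧ m ≠ 0)) := fun x y => Iff.rfl
  set a0 : Fin k ⊕ Fin 4 := Sum.inl ⟨0, hk⟩ with ha0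
  set b : Fin k ⊕ Fin 4 := Sum.inr 0 with hb
  have hsd : SecureDominating (Gk k) {a0, b} := by
    constructor
    · rintro (i | m) hv
      · refine ⟨a0, Or.inl rfl, ?_⟩
        rw [hadj]
        intro h
        exact hv (Or.inl (by rw [ha0, h]))
      · refine ⟨b, Or.inr rfl, ?_⟩
        rw [hadj]
        refine Or.inl ⟨rfl, fun h => hv (Or.inr (by rw [hb, h]; exact rfl))⟩
    · rintro (i | m) hv
      · have hi : i ≠ ⟨0, hk⟩ := fun h => hv (Or.inl (by rw [ha0, h]))
        refine ⟨a0, Or.inl rfl, by rw [hadj]; exact fun h => hi h.symm, ?_⟩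
        rintro (j | n) hw
        · refine ⟨Sum.inl i, ⟨Or.inr rfl, ?_⟩, ?_⟩
          · simp only [Set.mem_singleton_iff, ha0]
            intro h; exact hi (Sum.inl.injEq _ _ ▸ h)
          · rw [hadj]
            intro h
            exact hw ⟨Or.inr (by rw [h]; exact rfl), by
              simp only [Set.mem_singleton_iff, ha0]
              intro hc; exact hi (h ▸ Sum.inl.injEq _ _ ▸ hc)⟩
        · by_cases hn : n = 0
          · exact absurd ⟨Or.inl (Or.inr (by rw [hb, hn]; exact rfl)),
              by simp [hb, hn, ha0]⟩ hw
          · refine ⟨b, ⟨Or.inl (Or.inr rfl), by simp [hb, ha0]⟩, ?_⟩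
            rw [hadj]; exact Or.inl ⟨rfl, hn⟩
      · have hm : m ≠ 0 := fun h => hv (Or.inr (by rw [hb, h]; exact rfl))
        refine ⟨b, Or.inr rfl, by rw [hadj]; exact Or.inl ⟨rfl, hm⟩, ?_⟩
        rintro (j | n) hw
        · by_cases hj : j = ⟨0, hk⟩
          · exact absurd ⟨Or.inl (Or.inl (by rw [ha0, hj])),
              by simp [ha0, hb]⟩ hw
          · refine ⟨a0, ⟨Or.inl (Or.inl rfl), by simp [ha0, hb]⟩, ?_⟩
            rw [hadj]; exact fun h => hj h.symm
        · by_cases hn : n = m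
          · exact absurd ⟨Or.inr (by rw [hn]; exact rfl),
              by simp only [Set.mem_singleton_iff, hb]
                 intro hc; exact hm (hn ▸ Sum.inr.injEq _ _ ▸ hc)⟩ hw
          · by_cases hn0 : n = 0
            · refine ⟨Sum.inr m, ⟨Or.inr rfl, ?_⟩, ?_⟩
              · simp only [Set.mem_singleton_iff, hb]
                intro hc; exact hm (Sum.inr.injEq _ _ ▸ hc)
              · rw [hadj]; exact Or.inr ⟨hn0, hm⟩
            · refine ⟨a0, ⟨Or.inl (Or.inl rfl), by simp [ha0, hb]⟩, ?_⟩
              rw [hadj]; exact hn0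
  refine ⟨?_, hsd⟩
  have hmem : (2 : ℕ) ∈ {n | ∃ S : Set (Fin k ⊕ Fin 4),
      SecureDominating (Gk k) S ∧ S.ncard = n} := by
    refine ⟨{a0, b}, hsd, ?_⟩
    rw [Set.ncard_pair (by simp [ha0, hb])]
  have hlb : ∀ n ∈ {n | ∃ S : Set (Fin k ⊕ Fin 4),
      SecureDominating (Gk k) S ∧ S.ncard = n}, 2 ≤ n := by
    rintro n ⟨S, hS, rfl⟩
    by_contra hlt
    push_neg at hlt
    interval_cases h : S.ncard
    · rw [Set.ncard_eq_zero (Set.toFinite S)] at h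
      subst h
      obtain ⟨u, hu, -⟩ := hS.1 b (by simp)
      exact hu
    · obtain ⟨v, rfl⟩ := Set.ncard_eq_one.mp h
      rcases v with i | m
      · obtain ⟨u, hu, hadju⟩ := hS.1 b (by simp [hb])
        rw [Set.mem_singleton_iff] at hu
        subst hu
        rw [hadj] at hadju
        exact hadju rfl
      · by_cases hm : m = 0
        · obtain ⟨u, hu, hadju⟩ := hS.1 a0 (by simp [ha0])
          rw [Set.mem_singleton_iff] at hu
          subst hu
          rw [hadj] at hadju
          exact hadju hm
        · have hex : ∃ n : Fin 4, n ≠ 0 ∧ n ≠ m := by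
            by_cases h1 : m = 1
            · exact ⟨2, by decide, by rw [h1]; decide⟩
            · exact ⟨1, by decide, fun hc => h1 hc.symm⟩
          obtain ⟨p, hp0, hpm⟩ := hex
          obtain ⟨u, hu, hadju⟩ := hS.1 (Sum.inr p)
            (by simp only [Set.mem_singleton_iff]
                exact fun hc => hpm (Sum.inr.injEq _ _ ▸ hc))
          rw [Set.mem_singleton_iff] at hu
          subst hu
          rw [hadj] at hadju
          rcases hadju with ⟨h1, _⟩ | ⟨h1, _⟩
          · exact hm h1
          · exact hp0 h1
  exact le_antisymm (Nat.sInf_le hmem) (le_csInf ⟨2, hmem⟩ hlb)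
end
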